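/- arXiv:1502.04325 — 2 statements merged into one kernel-verified Lean document; each statement's English description precedes it below -/
import Mathlib

section
/- Let Ω ⊆ ℝ^m be an open set invariant under permutations of the coordinates, and let f : Ω → ℝ be a C¹ symmetric function (invariant under permutations of the coordinates). Let λ ∈ Ω have pairwise distinct entries and set A := diag(λ₁,…,λ_m) ∈ Sym_m. Then the function F(B) := f(λ(B)), defined for B in a neighborhood of A in Sym_m, is differentiable at A and DF(A)[η] = ∑_{i=1}^m (∂f/∂λ_i)(λ) η_{ii} for every η ∈ Sym_m. -/
open Filter Topology Matrix

attribute [local instance] Matrix.normedAddCommGroup Matrix.normedSpace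

/-- The real vector space `Sym_m` of symmetric `m × m` real matrices, as a submodule of
the space of all `m × m` real matrices. -/
def SymMat (m : ℕ) : Submodule ℝ (Matrix (Fin m) (Fin m) ℝ) where
  carrier := {A | A.IsSymm}
  add_mem' := fun {A B} hA hB => by
    simp only [Set.mem_setOf_eq, Matrix.IsSymm, Matrix.transpose_add] at *
    rw [hA, hB]
  zero_mem' := by simp [Matrix.IsSymm]
  smul_mem' := fun c A hA => by
    simp only [Set.mem_setOf_eq, Matrix.IsSymm, Matrix.transpose_smul] at *
    rw [hA]

/-- A real symmetric matrix is Hermitian. -/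
theorem IsSymm.isHermitianR {m : ℕ} {A : Matrix (Fin m) (Fin m) ℝ} (hA : A.IsSymm) :
    A.IsHermitian := by
  rw [Matrix.IsHermitian, Matrix.conjTranspose_eq_transpose_of_trivial]
  exact hA

/-- The eigenvalue vector `λ(A) ∈ ℝ^m` of a symmetric matrix `A ∈ Sym_m` (the eigenvalues
repeated according to multiplicity). -/
noncomputable def eigVec {m : ℕ} (A : SymMat m) : Fin m → ℝ :=
  (IsSymm.isHermitianR A.2).eigenvalues

/-- The `i`-th partial derivative `fᵢ(x) = ∂f/∂λᵢ(x)`. -/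
noncomputable def pd {m : ℕ} (f : (Fin m → ℝ) → ℝ) (x : Fin m → ℝ) (i : Fin m) : ℝ :=
  fderiv ℝ f x (Pi.single i 1)

/-- The second partial derivative `∂²f/∂λᵢ∂λⱼ(x)`. -/
noncomputable def pd2 {m : ℕ} (f : (Fin m → ℝ) → ℝ) (x : Fin m → ℝ) (i j : Fin m) : ℝ :=
  fderiv ℝ (fun y => fderiv ℝ f y (Pi.single j 1)) x (Pi.single i 1)

open Finset

theorem contDiff_det' (m : ℕ) (n : WithTop ℕ∞) :
    ContDiff ℝ n fun M : Matrix (Fin m) (Fin m) ℝ => M.det := by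
  have : (fun M : Matrix (Fin m) (Fin m) ℝ => M.det)
      = fun M => ∑ σ : Equiv.Perm (Fin m), (Equiv.Perm.sign σ : ℤ) • ∏ i, M (σ i) i := by
    funext M; rw [Matrix.det_apply]; simp [Units.smul_def]
  rw [this]
  refine ContDiff.sum fun σ _ => ContDiff.const_smul _ ?_
  refine contDiff_prod fun i _ => ?_
  exact (contDiff_apply ℝ ℝ i).comp (contDiff_apply ℝ (Fin m → ℝ) (σ i))

/-- Derivative of `s ↦ det (diagonal d + s • H)` at `s = 0`. -/
theorem hasDerivAt_det_diagonal (m : ℕ) (d : Fin m → ℝ) (H : Matrix (Fin m) (Fin m) ℝ) :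
    HasDerivAt (fun s : ℝ => (Matrix.diagonal d + s • H).det)
      (∑ k, (∏ j ∈ Finset.univ.erase k, d j) * H k k) 0 := by
  have hterm : ∀ σ : Equiv.Perm (Fin m),
      HasDerivAt (fun s : ℝ => (Equiv.Perm.sign σ : ℤ) •
          ∏ i, (Matrix.diagonal d + s • H) (σ i) i)
        ((Equiv.Perm.sign σ : ℤ) • ∑ k ∈ Finset.univ,
          (∏ j ∈ Finset.univ.erase k, (Matrix.diagonal d) (σ j) j) • H (σ k) k) 0 := by
    intro σ
    refine HasDerivAt.const_smul ((Equiv.Perm.sign σ : ℤ)) ?_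
    have h1 : ∀ i ∈ Finset.univ, HasDerivAt
        (fun s : ℝ => (Matrix.diagonal d + s • H) (σ i) i) (H (σ i) i) 0 := by
      intro i _
      have : (fun s : ℝ => (Matrix.diagonal d + s • H) (σ i) i)
          = fun s => (Matrix.diagonal d) (σ i) i + s * H (σ i) i := by
        funext s; simp [Matrix.add_apply, Matrix.smul_apply, smul_eq_mul]
      rw [this]
      simpa [mul_comm] using (hasDerivAt_id (0:ℝ)).const_mul (H (σ i) i) |>.const_add
        ((Matrix.diagonal d) (σ i) i)
    have := HasDerivAt.fun_finsetProd (u := Finset.univ) h1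
    refine this.congr_deriv (Eq.symm (Finset.sum_congr rfl fun k _ => ?_))
    simp [Matrix.add_apply, Matrix.smul_apply]
  have hsum := HasDerivAt.fun_sum (fun σ (_ : σ ∈ Finset.univ) => hterm σ)
  have heq : (fun s : ℝ => (Matrix.diagonal d + s • H).det)
      = fun s => ∑ σ : Equiv.Perm (Fin m), (Equiv.Perm.sign σ : ℤ) •
          ∏ i, (Matrix.diagonal d + s • H) (σ i) i := by
    funext s; rw [Matrix.det_apply]; simp [Units.smul_def]
  rw [heq]
  refine hsum.congr_deriv (Eq.symm ?_)
  rw [Finset.sum_eq_single (1 : Equiv.Perm (Fin m))]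
  · simp only [Equiv.Perm.sign_one, Units.val_one, one_smul, Equiv.Perm.one_apply]
    refine Finset.sum_congr rfl fun k _ => ?_
    simp [smul_eq_mul]
  · intro σ _ hσ
    rw [Finset.sum_eq_zero, smul_zero]
    intro k _
    obtain ⟨a, ha⟩ : ∃ a, σ a ≠ a := by
      by_contra h; push_neg at h; exact hσ (Equiv.ext h)
    have hz : ∃ j ∈ Finset.univ.erase k, (Matrix.diagonal d) (σ j) j = 0 := by
      rcases eq_or_ne a k with rfl | hak
      · have hinv : σ⁻¹ a ≠ a := by
          rw [Ne, Equiv.Perm.inv_eq_iff_eq]; exact fun h => ha h.symm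
        refine ⟨σ⁻¹ a, Finset.mem_erase.2 ⟨hinv, Finset.mem_univ _⟩, ?_⟩
        rw [Matrix.diagonal_apply_ne]
        simp only [Equiv.Perm.inv_def, Equiv.apply_symm_apply]
        exact fun h => hinv h.symm
      · exact ⟨a, Finset.mem_erase.2 ⟨hak, Finset.mem_univ _⟩,
          Matrix.diagonal_apply_ne _ ha⟩
    obtain ⟨j, hj, hj0⟩ := hz
    rw [Finset.prod_eq_zero (f := fun x => (Matrix.diagonal d) (σ x) x) hj hj0, zero_smul]
  · simp

theorem det_smul_one_sub_eq (m : ℕ) (B : Matrix (Fin m) (Fin m) ℝ) (hB : B.IsHermitian)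
    (t : ℝ) : (t • (1 : Matrix (Fin m) (Fin m) ℝ) - B).det = ∏ j, (t - hB.eigenvalues j) := by
  have h : star (hB.eigenvectorUnitary : Matrix (Fin m) (Fin m) ℝ) * B
      * (hB.eigenvectorUnitary : Matrix (Fin m) (Fin m) ℝ)
      = Matrix.diagonal (RCLike.ofReal ∘ hB.eigenvalues) := by
    simpa [Unitary.conjStarAlgAut_apply] using hB.conjStarAlgAut_star_eigenvectorUnitary
  set U : Matrix (Fin m) (Fin m) ℝ := (hB.eigenvectorUnitary : Matrix (Fin m) (Fin m) ℝ)
  have hU : star U * U = 1 := Unitary.coe_star_mul_self hB.eigenvectorUnitary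
  have key : star U * (t • (1 : Matrix (Fin m) (Fin m) ℝ) - B) * U
      = Matrix.diagonal (fun j => t - hB.eigenvalues j) := by
    rw [Matrix.mul_sub, Matrix.sub_mul, h]
    have h2 : star U * (t • (1 : Matrix (Fin m) (Fin m) ℝ)) * U = t • (1 : Matrix _ _ ℝ) := by
      rw [Matrix.mul_smul, Matrix.mul_one, Matrix.smul_mul, hU]
    rw [h2]
    ext i j
    rcases eq_or_ne i j with rfl | hij
    · simp [Matrix.diagonal_apply_eq, Matrix.one_apply_eq, Matrix.sub_apply, Matrix.smul_apply,
        RCLike.ofReal_real_eq_id]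
    · simp [Matrix.diagonal_apply_ne _ hij, Matrix.one_apply_ne hij, Matrix.sub_apply,
        Matrix.smul_apply]
  have hdet := congrArg Matrix.det key
  rw [Matrix.det_mul, Matrix.det_mul, Matrix.det_diagonal] at hdet
  have hdet1 : (star U).det * U.det = 1 := by
    rw [← Matrix.det_mul, hU, Matrix.det_one]
  calc (t • (1 : Matrix (Fin m) (Fin m) ℝ) - B).det
      = ((star U).det * U.det) * (t • (1 : Matrix (Fin m) (Fin m) ℝ) - B).det := by
        rw [hdet1, one_mul]
    _ = (star U).det * (t • (1 : Matrix (Fin m) (Fin m) ℝ) - B).det * U.det := by ring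
    _ = ∏ j, (t - hB.eigenvalues j) := hdet

theorem exists_comp_perm (m : ℕ) (u v : Fin m → ℝ) (hv : Function.Injective v)
    (hroot : ∀ i, ∃ j, u j = v i) : ∃ σ : Equiv.Perm (Fin m), u = v ∘ σ := by
  classical
  set S : Multiset ℝ := Finset.univ.val.map u with hS
  set T : Multiset ℝ := Finset.univ.val.map v with hT
  have hTnodup : T.Nodup := Finset.univ.nodup.map hv
  have hTS : T ≤ S := by
    rw [Multiset.le_iff_count]
    intro a
    rcases Nat.eq_zero_or_pos (T.count a) with h0 | hpos
    · simp [h0]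
    · have haT : a ∈ T := Multiset.count_pos.mp hpos
      have h1 : T.count a = 1 := Multiset.count_eq_one_of_mem hTnodup haT
      obtain ⟨i, _, hi⟩ := Multiset.mem_map.mp haT
      obtain ⟨j, hj⟩ := hroot i
      have haS : a ∈ S := Multiset.mem_map.mpr ⟨j, by simp, by rw [hj, hi]⟩
      rw [h1]
      exact Multiset.one_le_count_iff_mem.mpr haS
  have hcard : Multiset.card S ≤ Multiset.card T := by simp [hS, hT]
  have hST : T = S := Multiset.eq_of_le_of_card_le hTS hcard
  have hSnodup : S.Nodup := hST ▸ hTnodup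
  have hu : Function.Injective u := fun a b hab =>
    Multiset.inj_on_of_nodup_map hSnodup a (by simp) b (by simp) hab
  have hmem : ∀ i, ∃ jj, v jj = u i := by
    intro i
    have h1 : u i ∈ S := Multiset.mem_map.mpr ⟨i, by simp, rfl⟩
    rw [← hST] at h1
    obtain ⟨jj, _, h2⟩ := Multiset.mem_map.mp h1
    exact ⟨jj, h2⟩
  choose w hw using hmem
  have hwinj : Function.Injective w := fun a b hab => hu (by rw [← hw a, ← hw b, hab])
  exact ⟨Equiv.ofBijective w (Finite.injective_iff_bijective.mp hwinj),
    funext fun i => ((hw i).symm : u i = v (w i))⟩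

theorem hasDerivAt_dir {X : Type*} [NormedAddCommGroup X] [NormedSpace ℝ X] {h : X → ℝ} {p : X}
    (hd : DifferentiableAt ℝ h p) (w : X) :
    HasDerivAt (fun s : ℝ => h (p + s • w)) (fderiv ℝ h p w) 0 := by
  have h1 : HasDerivAt (fun s : ℝ => p + s • w) w 0 := by
    simpa using ((hasDerivAt_id (0:ℝ)).smul_const w).const_add p
  have h0 : p + (0:ℝ) • w = p := by simp
  have h2 := (h0 ▸ hd.hasFDerivAt).comp_hasDerivAt 0 h1
  rw [zero_smul, add_zero] at h2
  exact h2


noncomputable def entryCLM (m : ℕ) (i j : Fin m) : Matrix (Fin m) (Fin m) ℝ →L[ℝ] ℝ :=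
  LinearMap.toContinuousLinearMap
    ((LinearMap.proj j : ((Fin m) → ℝ) →ₗ[ℝ] ℝ).comp
      (LinearMap.proj (R := ℝ) (φ := fun _ : Fin m => (Fin m) → ℝ) i))

@[simp] theorem entryCLM_apply (m : ℕ) (i j : Fin m) (M : Matrix (Fin m) (Fin m) ℝ) :
    entryCLM m i j M = M i j := rfl

/-- the key per-index construction -/
theorem key_phi (m : ℕ) (lam : Fin m → ℝ) (hdist : Function.Injective lam)
    (A : SymMat m) (hAdiag : (A : Matrix (Fin m) (Fin m) ℝ) = Matrix.diagonal lam)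
    (i : Fin m) :
    ∃ φi : SymMat m → ℝ,
      HasStrictFDerivAt φi ((entryCLM m i i).comp (SymMat m).subtypeL) A ∧
      φi A = lam i ∧
      ∀ᶠ B in 𝓝 A, ((φi B) • (1 : Matrix (Fin m) (Fin m) ℝ) - (B : Matrix (Fin m) (Fin m) ℝ)).det = 0 := by
  classical
  set gg : SymMat m × ℝ → ℝ :=
    fun p => (p.2 • (1 : Matrix (Fin m) (Fin m) ℝ) - (p.1 : Matrix (Fin m) (Fin m) ℝ)).det
    with hgg_def
  have hgg : ContDiff ℝ (⊤ : WithTop ℕ∞) gg := by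
    have hT : ContDiff ℝ (⊤ : WithTop ℕ∞) (fun p : SymMat m × ℝ =>
        p.2 • (1 : Matrix (Fin m) (Fin m) ℝ) - (p.1 : Matrix (Fin m) (Fin m) ℝ)) := by
      exact (contDiff_snd.smul contDiff_const).sub
        ((SymMat m).subtypeL.contDiff.comp contDiff_fst)
    exact (contDiff_det' m _).comp hT
  set p₀ : SymMat m × ℝ := (A, lam i) with hp₀
  set Dgg : (SymMat m × ℝ) →L[ℝ] ℝ := fderiv ℝ gg p₀ with hDgg
  have hdiffgg : DifferentiableAt ℝ gg p₀ := (hgg.differentiable (by simp)).differentiableAt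
  set d : Fin m → ℝ := fun j => lam i - lam j with hd
  have hdi : d i = 0 := by simp [hd]
  set c : ℝ := ∏ j ∈ Finset.univ.erase i, d j with hc
  have hcne : c ≠ 0 := by
    rw [hc, Finset.prod_ne_zero_iff]
    intro j hj
    have hji : j ≠ i := (Finset.mem_erase.mp hj).1
    simp only [hd, sub_ne_zero]
    exact fun h => hji (hdist h.symm)
  have hsum : ∀ M : Matrix (Fin m) (Fin m) ℝ,
      (∑ k, (∏ j ∈ Finset.univ.erase k, d j) * M k k) = c * M i i := by
    intro M
    have hz : ∀ b ∈ Finset.univ, b ≠ i → (∏ j ∈ Finset.univ.erase b, d j) * M b b = 0 := by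
      intro b _ hb
      rw [Finset.prod_eq_zero (Finset.mem_erase.mpr ⟨Ne.symm hb, Finset.mem_univ i⟩) hdi, zero_mul]
    rw [Finset.sum_eq_single_of_mem i (Finset.mem_univ i) hz]
  have hDmat : (lam i) • (1 : Matrix (Fin m) (Fin m) ℝ) - (A : Matrix (Fin m) (Fin m) ℝ)
      = Matrix.diagonal d := by
    rw [hAdiag]
    ext a b
    rcases eq_or_ne a b with rfl | hab
    · simp [Matrix.diagonal_apply_eq, Matrix.one_apply_eq, hd]
    · simp [Matrix.diagonal_apply_ne _ hab, Matrix.one_apply_ne hab]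
  have hdirB : ∀ η : SymMat m, Dgg (η, 0) = -(c * (η : Matrix (Fin m) (Fin m) ℝ) i i) := by
    intro η
    have h1 := hasDerivAt_dir hdiffgg (η, (0:ℝ))
    have h2 : (fun s : ℝ => gg (p₀ + s • (η, (0:ℝ))))
        = fun s : ℝ => (Matrix.diagonal d + s • (-(η : Matrix (Fin m) (Fin m) ℝ))).det := by
      funext s
      have hps : p₀ + s • (η, (0:ℝ)) = (A + s • η, lam i) := by
        simp [hp₀, Prod.ext_iff]
      rw [hps]
      show ((lam i) • (1 : Matrix (Fin m) (Fin m) ℝ)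
        - ((A + s • η : SymMat m) : Matrix (Fin m) (Fin m) ℝ)).det = _
      congr 1
      push_cast
      rw [← hDmat, smul_neg]
      abel
    rw [h2] at h1
    have h3 := hasDerivAt_det_diagonal m d (-(η : Matrix (Fin m) (Fin m) ℝ))
    have h4 := h1.unique h3
    change Dgg _ = _ at h4
    rw [h4, hsum]
    simp
  have hdirT : Dgg (0, 1) = c := by
    have h1 := hasDerivAt_dir hdiffgg ((0 : SymMat m), (1:ℝ))
    have h2 : (fun s : ℝ => gg (p₀ + s • ((0 : SymMat m), (1:ℝ))))
        = fun s : ℝ => (Matrix.diagonal d + s • (1 : Matrix (Fin m) (Fin m) ℝ)).det := by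
      funext s
      have hps : p₀ + s • ((0 : SymMat m), (1:ℝ)) = (A, lam i + s) := by
        simp [hp₀, Prod.ext_iff]
      rw [hps]
      show ((lam i + s) • (1 : Matrix (Fin m) (Fin m) ℝ) - (A : Matrix (Fin m) (Fin m) ℝ)).det = _
      congr 1
      rw [add_smul, ← hDmat]
      abel
    rw [h2] at h1
    have h3 := hasDerivAt_det_diagonal m d (1 : Matrix (Fin m) (Fin m) ℝ)
    have h4 := h1.unique h3
    change Dgg _ = _ at h4
    rw [h4, hsum]
    simp [Matrix.one_apply_eq]
  have hsplit : ∀ p : SymMat m × ℝ, Dgg p = Dgg (p.1, 0) + p.2 * c := by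
    intro p
    have hp : p = (p.1, (0:ℝ)) + p.2 • ((0 : SymMat m), (1:ℝ)) := by simp [Prod.ext_iff]
    rw [← hdirT]
    conv_lhs => rw [hp]
    rw [map_add, _root_.map_smul, smul_eq_mul]
  -- the equiv
  set Finv : (SymMat m × ℝ) →L[ℝ] (SymMat m × ℝ) :=
    (ContinuousLinearMap.fst ℝ (SymMat m) ℝ).prod
      (c⁻¹ • (ContinuousLinearMap.snd ℝ (SymMat m) ℝ
        - Dgg.comp ((ContinuousLinearMap.fst ℝ (SymMat m) ℝ).prod 0))) with hFinv
  have hFinvapp : ∀ q : SymMat m × ℝ, Finv q = (q.1, c⁻¹ * (q.2 - Dgg (q.1, 0))) :=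
    fun q => rfl
  set F : (SymMat m × ℝ) →L[ℝ] (SymMat m × ℝ) :=
    (ContinuousLinearMap.fst ℝ (SymMat m) ℝ).prod Dgg with hF
  have hFapp : ∀ p : SymMat m × ℝ, F p = (p.1, Dgg p) := fun p => rfl
  have hleft : Function.LeftInverse Finv F := by
    intro p
    rw [hFapp, hFinvapp]
    refine Prod.ext rfl ?_
    show c⁻¹ * (Dgg p - Dgg (p.1, 0)) = p.2
    rw [hsplit p]
    field_simp
    ring
  have hright : Function.RightInverse Finv F := by
    intro q
    rw [hFinvapp, hFapp]
    refine Prod.ext rfl ?_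
    show Dgg (q.1, c⁻¹ * (q.2 - Dgg (q.1, 0))) = q.2
    rw [hsplit (q.1, c⁻¹ * (q.2 - Dgg (q.1, 0)))]
    show Dgg (q.1, 0) + c⁻¹ * (q.2 - Dgg (q.1, 0)) * c = q.2
    field_simp
    ring
  set G' : (SymMat m × ℝ) ≃L[ℝ] (SymMat m × ℝ) :=
    ContinuousLinearEquiv.equivOfInverse F Finv hleft hright with hG'
  set G : SymMat m × ℝ → SymMat m × ℝ := fun p => (p.1, gg p) with hG
  have hGc : ContDiff ℝ (⊤ : WithTop ℕ∞) G := contDiff_fst.prodMk hgg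
  have hGF : HasFDerivAt G (G' : (SymMat m × ℝ) →L[ℝ] (SymMat m × ℝ)) p₀ := by
    have h1 : HasFDerivAt G F p₀ :=
      (ContinuousLinearMap.fst ℝ (SymMat m) ℝ).hasFDerivAt.prodMk hdiffgg.hasFDerivAt
    have h2 : (G' : (SymMat m × ℝ) →L[ℝ] (SymMat m × ℝ)) = F := rfl
    rw [h2]
    exact h1
  have hGstrict : HasStrictFDerivAt G (G' : (SymMat m × ℝ) →L[ℝ] (SymMat m × ℝ)) p₀ :=
    hGc.contDiffAt.hasStrictFDerivAt' hGF (by simp)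
  set Ψ : SymMat m × ℝ → SymMat m × ℝ := hGstrict.localInverse _ _ _ with hΨ
  have hGp₀ : G p₀ = (A, 0) := by
    refine Prod.ext rfl ?_
    show gg p₀ = 0
    show ((lam i) • (1 : Matrix (Fin m) (Fin m) ℝ) - (A : Matrix (Fin m) (Fin m) ℝ)).det = 0
    rw [hDmat, Matrix.det_diagonal]
    exact Finset.prod_eq_zero (Finset.mem_univ i) hdi
  refine ⟨fun B => (Ψ (B, 0)).2, ?_, ?_, ?_⟩
  · -- strict derivative
    have hΨs : HasStrictFDerivAt Ψ
        (G'.symm : (SymMat m × ℝ) →L[ℝ] (SymMat m × ℝ)) (A, 0) := by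
      have h := hGstrict.to_localInverse
      rwa [hGp₀] at h
    have hinl : HasStrictFDerivAt (fun B : SymMat m => (B, (0:ℝ)))
        (ContinuousLinearMap.inl ℝ (SymMat m) ℝ) A :=
      (ContinuousLinearMap.inl ℝ (SymMat m) ℝ).hasStrictFDerivAt
    have hcomp1 : HasStrictFDerivAt (fun B : SymMat m => Ψ (B, 0))
        ((G'.symm : (SymMat m × ℝ) →L[ℝ] (SymMat m × ℝ)).comp
          (ContinuousLinearMap.inl ℝ (SymMat m) ℝ)) A := hΨs.comp A hinl
    have hcomp2 : HasStrictFDerivAt (fun B : SymMat m => (Ψ (B, 0)).2)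
        ((ContinuousLinearMap.snd ℝ (SymMat m) ℝ).comp
          ((G'.symm : (SymMat m × ℝ) →L[ℝ] (SymMat m × ℝ)).comp
            (ContinuousLinearMap.inl ℝ (SymMat m) ℝ))) A :=
      (ContinuousLinearMap.snd ℝ (SymMat m) ℝ).hasStrictFDerivAt.comp A hcomp1
    convert hcomp2 using 1
    ext η
    show (η : Matrix (Fin m) (Fin m) ℝ) i i
      = ((G'.symm : (SymMat m × ℝ) →L[ℝ] (SymMat m × ℝ)) (η, 0)).2
    have hsymm : (G'.symm : (SymMat m × ℝ) →L[ℝ] (SymMat m × ℝ)) (η, 0) = Finv (η, 0) := rfl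
    rw [hsymm, hFinvapp]
    show (η : Matrix (Fin m) (Fin m) ℝ) i i = c⁻¹ * ((0:ℝ) - Dgg (η, 0))
    rw [hdirB η]
    field_simp
    ring
  · -- value at A
    have h := hGstrict.localInverse_apply_image
    rw [hGp₀] at h
    show (Ψ (A, 0)).2 = lam i
    rw [← hΨ] at h
    rw [h]
  · -- root property
    have h := hGstrict.eventually_right_inverse
    rw [hGp₀] at h
    have hcont : Filter.Tendsto (fun B : SymMat m => (B, (0:ℝ))) (𝓝 A) (𝓝 (A, (0:ℝ))) :=
      (continuous_id.prodMk continuous_const).continuousAt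
    have h2 := hcont.eventually h
    filter_upwards [h2] with B hB
    have hfst : (Ψ (B, 0)).1 = B := congrArg Prod.fst hB
    have hsnd : gg (Ψ (B, 0)) = 0 := congrArg Prod.snd hB
    have hsnd' : ((Ψ (B, 0)).2 • (1 : Matrix (Fin m) (Fin m) ℝ)
        - ((Ψ (B, 0)).1 : Matrix (Fin m) (Fin m) ℝ)).det = 0 := hsnd
    rw [hfst] at hsnd'
    exact hsnd'

/-- if `f` is `C¹` and symmetric on an open permutation-invariant set
`Ω ⊆ ℝ^m`, and `λ ∈ Ω` has pairwise distinct entries, then `F(B) = f(λ(B))` on `Sym_m` is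
differentiable at `A = diag(λ)` with `DF(A)[η] = ∑ᵢ fᵢ(λ) ηᵢᵢ`. -/
theorem stmt_15 (m : ℕ) (hm : 2 ≤ m)
    (Ω : Set (Fin m → ℝ)) (hΩopen : IsOpen Ω)
    (hΩperm : ∀ π : Equiv.Perm (Fin m), ∀ x ∈ Ω, x ∘ π ∈ Ω)
    (f : (Fin m → ℝ) → ℝ)
    (hf : ContDiffOn ℝ 1 f Ω)
    (hfsymm : ∀ π : Equiv.Perm (Fin m), ∀ x ∈ Ω, f (x ∘ π) = f x)
    (lam : Fin m → ℝ) (hlam : lam ∈ Ω) (hdist : Function.Injective lam)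
    (A : SymMat m) (hAdiag : (A : Matrix (Fin m) (Fin m) ℝ) = Matrix.diagonal lam) :
    DifferentiableAt ℝ (fun B : SymMat m => f (eigVec B)) A ∧
    ∀ η : SymMat m,
      fderiv ℝ (fun B : SymMat m => f (eigVec B)) A η
        = ∑ i, pd f lam i * (η : Matrix (Fin m) (Fin m) ℝ) i i := by
  classical
  choose φ hφ1 hφ2 hφ3 using fun i => key_phi m lam hdist A hAdiag i
  set Φ : SymMat m → (Fin m → ℝ) := fun B j => φ j B with hΦ
  set DΦ : SymMat m →L[ℝ] (Fin m → ℝ) :=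
    ContinuousLinearMap.pi (fun j => (entryCLM m j j).comp (SymMat m).subtypeL) with hDΦ
  have hΦA : Φ A = lam := funext hφ2
  have hΦfd : HasFDerivAt Φ DΦ A := hasFDerivAt_pi.mpr fun j => (hφ1 j).hasFDerivAt
  have hΦcont : ContinuousAt Φ A := hΦfd.differentiableAt.continuousAt
  -- f is differentiable at lam
  have hfd : DifferentiableAt ℝ f lam := by
    have h1 : Ω ∈ 𝓝 lam := hΩopen.mem_nhds hlam
    exact ((hf.differentiableOn one_ne_zero).differentiableAt h1)
  -- eventual properties
  have hmemΩ : ∀ᶠ B in 𝓝 A, Φ B ∈ Ω :=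
    hΦcont.eventually_mem (hΦA ▸ hΩopen.mem_nhds hlam)
  have hUopen : IsOpen {y : Fin m → ℝ | Function.Injective y} := by
    have heq : {y : Fin m → ℝ | Function.Injective y}
        = ⋂ (i : Fin m), ⋂ (j : Fin m), ⋂ (_ : i ≠ j), {y : Fin m → ℝ | y i ≠ y j} := by
      ext y
      simp only [Set.mem_setOf_eq, Set.mem_iInter]
      constructor
      · intro hy i j hij
        exact fun h => hij (hy h)
      · intro hy a b hab
        by_contra hne
        exact hy a b hne hab
    rw [heq]
    exact isOpen_iInter_of_finite fun i => isOpen_iInter_of_finite fun j =>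
      isOpen_iInter_of_finite fun _ =>
        isOpen_ne_fun (continuous_apply i) (continuous_apply j)
  have hinj : ∀ᶠ B in 𝓝 A, Function.Injective (Φ B) := by
    have : lam ∈ {y : Fin m → ℝ | Function.Injective y} := hdist
    exact hΦcont.eventually_mem (hΦA ▸ hUopen.mem_nhds this)
  have hroots : ∀ᶠ B in 𝓝 A, ∀ j,
      ((Φ B j) • (1 : Matrix (Fin m) (Fin m) ℝ) - (B : Matrix (Fin m) (Fin m) ℝ)).det = 0 :=
    Filter.eventually_all.mpr fun j => hφ3 j
  -- eventual equality
  have heq : (fun B : SymMat m => f (eigVec B)) =ᶠ[𝓝 A] fun B => f (Φ B) := by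
    filter_upwards [hmemΩ, hinj, hroots] with B h1 h2 h3
    have hroot : ∀ i, ∃ j, eigVec B j = Φ B i := by
      intro i
      have h4 := h3 i
      rw [det_smul_one_sub_eq m (B : Matrix (Fin m) (Fin m) ℝ) (IsSymm.isHermitianR B.2)] at h4
      obtain ⟨j, _, hj⟩ := Finset.prod_eq_zero_iff.mp h4
      exact ⟨j, (sub_eq_zero.mp hj).symm⟩
    obtain ⟨σ, hσ⟩ := exists_comp_perm m (eigVec B) (Φ B) h2 hroot
    show f (eigVec B) = f (Φ B)
    rw [hσ]
    exact hfsymm σ (Φ B) h1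
  -- conclusion
  have hcomp : HasFDerivAt (fun B => f (Φ B)) ((fderiv ℝ f lam).comp DΦ) A := by
    have hf2 : HasFDerivAt f (fderiv ℝ f lam) (Φ A) := by
      rw [hΦA]; exact hfd.hasFDerivAt
    exact hf2.comp A hΦfd
  have hdiff : DifferentiableAt ℝ (fun B : SymMat m => f (eigVec B)) A :=
    (heq.differentiableAt_iff).mpr hcomp.differentiableAt
  refine ⟨hdiff, fun η => ?_⟩
  have hfde : fderiv ℝ (fun B : SymMat m => f (eigVec B)) A
      = (fderiv ℝ f lam).comp DΦ := by
    rw [heq.fderiv_eq, hcomp.fderiv]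
  rw [hfde]
  have hDΦη : DΦ η = fun j => (η : Matrix (Fin m) (Fin m) ℝ) j j := rfl
  rw [ContinuousLinearMap.comp_apply, hDΦη]
  have hL := LinearMap.pi_apply_eq_sum_univ ((fderiv ℝ f lam) : (Fin m → ℝ) →ₗ[ℝ] ℝ)
    (fun j => (η : Matrix (Fin m) (Fin m) ℝ) j j)
  rw [ContinuousLinearMap.coe_coe] at hL
  rw [hL]
  refine Finset.sum_congr rfl fun i _ => ?_
  have hsingle : (fun j => if i = j then (1:ℝ) else 0) = Pi.single i 1 := by
    funext j
    rw [Pi.single_apply]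
    by_cases h : i = j <;> simp [h, eq_comm]
  rw [hsingle]
  show (η : Matrix (Fin m) (Fin m) ℝ) i i • (fderiv ℝ f lam) (Pi.single i 1)
    = pd f lam i * (η : Matrix (Fin m) (Fin m) ℝ) i i
  rw [pd, smul_eq_mul, mul_comm]
end

section
/- Let A, B ∈ Sym_m with λ(A) ∈ Γ and B − A positive semidefinite. Then λ(B) ∈ Γ and f(λ(B)) ≥ f(λ(A)); moreover, if B − A is positive definite then f(λ(B)) > f(λ(A)). -/
open Filter Topology Matrix

attribute [local instance] Matrix.normedAddCommGroup Matrix.normedSpace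

section Aux

open Matrix

lemma inner_eq_dot' {m : ℕ} (x y : EuclideanSpace ℝ (Fin m)) :
    (inner ℝ x y : ℝ) = (⇑x : Fin m → ℝ) ⬝ᵥ ⇑y := by
  simp [PiLp.inner_apply, dotProduct, RCLike.inner_apply, mul_comm]

lemma euclid_lin_eig {m : ℕ} {A : Matrix (Fin m) (Fin m) ℝ} (hA : A.IsHermitian) (j : Fin m) :
    Matrix.toEuclideanLin A (hA.eigenvectorBasis j)
      = hA.eigenvalues j • hA.eigenvectorBasis j := by
  apply (WithLp.equiv 2 (Fin m → ℝ)).injective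
  simp only [Matrix.toEuclideanLin_apply]
  simpa using hA.mulVec_eigenvectorBasis j

lemma quad_expansion {m : ℕ} {A : Matrix (Fin m) (Fin m) ℝ} (hA : A.IsHermitian)
    (x : EuclideanSpace ℝ (Fin m)) :
    (⇑x : Fin m → ℝ) ⬝ᵥ (A *ᵥ ⇑x)
      = ∑ i, hA.eigenvalues i * (hA.eigenvectorBasis.repr x i)^2 := by
  set u := hA.eigenvectorBasis with hu
  set c := fun i => u.repr x i with hc
  have hdot : (⇑x : Fin m → ℝ) ⬝ᵥ (A *ᵥ ⇑x) = (inner ℝ x (Matrix.toEuclideanLin A x) : ℝ) := by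
    rw [inner_eq_dot']; congr 1
  have hx : x = ∑ i, c i • u i := (u.sum_repr x).symm
  have hTx : Matrix.toEuclideanLin A x = ∑ i, (hA.eigenvalues i * c i) • u i := by
    conv_lhs => rw [hx, map_sum]
    refine Finset.sum_congr rfl fun i _ => ?_
    rw [_root_.map_smul, euclid_lin_eig hA i, smul_smul, mul_comm]
  rw [hdot, hTx, inner_sum]
  refine Finset.sum_congr rfl fun i _ => ?_
  rw [real_inner_smul_right]
  have : (inner ℝ x (u i) : ℝ) = c i := by
    rw [real_inner_comm]; exact (u.repr_apply_apply x i).symm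
  rw [this]; ring

lemma normsq_expansion {m : ℕ} {A : Matrix (Fin m) (Fin m) ℝ} (hA : A.IsHermitian)
    (x : EuclideanSpace ℝ (Fin m)) :
    (⇑x : Fin m → ℝ) ⬝ᵥ ⇑x = ∑ i, (hA.eigenvectorBasis.repr x i)^2 := by
  rw [← inner_eq_dot', ← hA.eigenvectorBasis.repr.inner_map_map x x]
  simp only [PiLp.inner_apply, RCLike.inner_apply, conj_trivial, sq]

lemma repr_eq_zero_of_mem_span {m : ℕ} {A : Matrix (Fin m) (Fin m) ℝ} (hA : A.IsHermitian)
    (s : Finset (Fin m)) {x : EuclideanSpace ℝ (Fin m)}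
    (hx : x ∈ Submodule.span ℝ (hA.eigenvectorBasis '' ↑s)) {j : Fin m} (hj : j ∉ s) :
    hA.eigenvectorBasis.repr x j = 0 := by
  set u := hA.eigenvectorBasis
  set L : EuclideanSpace ℝ (Fin m) →ₗ[ℝ] ℝ :=
    (EuclideanSpace.projₗ j).comp u.repr.toLinearEquiv.toLinearMap with hL
  have hgen : hA.eigenvectorBasis '' ↑s ⊆ (LinearMap.ker L : Set _) := by
    rintro _ ⟨i, hi, rfl⟩
    have hji : j ≠ i := fun h => hj (h ▸ hi)
    have h0 : u.repr (u i) j = 0 := by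
      rw [u.repr_self i]
      simp [EuclideanSpace.single_apply, hji]
    exact h0
  have := Submodule.span_le.mpr hgen hx
  simpa [L, LinearMap.mem_ker, LinearIsometryEquiv.coe_toLinearEquiv] using this

lemma finrank_span_eigs {m : ℕ} {A : Matrix (Fin m) (Fin m) ℝ} (hA : A.IsHermitian)
    (s : Finset (Fin m)) :
    Module.finrank ℝ (Submodule.span ℝ (hA.eigenvectorBasis '' ↑s)) = s.card := by
  set u := hA.eigenvectorBasis
  have hli : LinearIndependent ℝ (fun i : ↑s => u i) :=
    u.orthonormal.linearIndependent.comp Subtype.val Subtype.val_injective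
  have hrange : Set.range (fun i : ↑s => u i) = u '' ↑s := by
    ext y; simp
  rw [← hrange, finrank_span_eq_card hli, Fintype.card_coe]

lemma exists_nonzero_mem_inf {m : ℕ} (S T : Submodule ℝ (EuclideanSpace ℝ (Fin m)))
    (h : m < Module.finrank ℝ S + Module.finrank ℝ T) : ∃ x ∈ S ⊓ T, x ≠ 0 := by
  have h1 : Module.finrank ℝ (S ⊔ T : Submodule ℝ _) + Module.finrank ℝ (S ⊓ T : Submodule ℝ _)
      = Module.finrank ℝ S + Module.finrank ℝ T :=
    Submodule.finrank_sup_add_finrank_inf_eq S T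
  have h2 : Module.finrank ℝ (S ⊔ T : Submodule ℝ _) ≤ m := by
    simpa [finrank_euclideanSpace_fin] using (S ⊔ T).finrank_le
  have h3 : 0 < Module.finrank ℝ (S ⊓ T : Submodule ℝ _) := by omega
  have h4 : (S ⊓ T) ≠ ⊥ := by
    intro hbot
    rw [hbot, finrank_bot] at h3
    exact lt_irrefl 0 h3
  exact (Submodule.ne_bot_iff _).mp h4

/-- Lower bound of the quadratic form on the span of high eigenvectors. -/
lemma quad_lower {m : ℕ} {A : Matrix (Fin m) (Fin m) ℝ} (hA : A.IsHermitian)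
    (k : Fin m) {x : EuclideanSpace ℝ (Fin m)}
    (hx : x ∈ Submodule.span ℝ
      (hA.eigenvectorBasis '' ↑(Finset.image (Tuple.sort hA.eigenvalues) (Finset.Ici k)))) :
    hA.eigenvalues (Tuple.sort hA.eigenvalues k) * ((⇑x : Fin m → ℝ) ⬝ᵥ ⇑x)
      ≤ (⇑x : Fin m → ℝ) ⬝ᵥ (A *ᵥ ⇑x) := by
  rw [quad_expansion hA x, normsq_expansion hA x, Finset.mul_sum]
  refine Finset.sum_le_sum fun i _ => ?_
  by_cases hi : i ∈ Finset.image (Tuple.sort hA.eigenvalues) (Finset.Ici k)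
  · obtain ⟨l, hl, rfl⟩ := Finset.mem_image.mp hi
    have : hA.eigenvalues (Tuple.sort hA.eigenvalues k)
        ≤ hA.eigenvalues (Tuple.sort hA.eigenvalues l) :=
      Tuple.monotone_sort hA.eigenvalues (Finset.mem_Ici.mp hl)
    exact mul_le_mul_of_nonneg_right this (sq_nonneg _)
  · rw [repr_eq_zero_of_mem_span hA _ hx hi]
    simp

/-- Upper bound of the quadratic form on the span of low eigenvectors. -/
lemma quad_upper {m : ℕ} {B : Matrix (Fin m) (Fin m) ℝ} (hB : B.IsHermitian)
    (k : Fin m) {x : EuclideanSpace ℝ (Fin m)}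
    (hx : x ∈ Submodule.span ℝ
      (hB.eigenvectorBasis '' ↑(Finset.image (Tuple.sort hB.eigenvalues) (Finset.Iic k)))) :
    (⇑x : Fin m → ℝ) ⬝ᵥ (B *ᵥ ⇑x)
      ≤ hB.eigenvalues (Tuple.sort hB.eigenvalues k) * ((⇑x : Fin m → ℝ) ⬝ᵥ ⇑x) := by
  rw [quad_expansion hB x, normsq_expansion hB x, Finset.mul_sum]
  refine Finset.sum_le_sum fun i _ => ?_
  by_cases hi : i ∈ Finset.image (Tuple.sort hB.eigenvalues) (Finset.Iic k)
  · obtain ⟨l, hl, rfl⟩ := Finset.mem_image.mp hi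
    have : hB.eigenvalues (Tuple.sort hB.eigenvalues l)
        ≤ hB.eigenvalues (Tuple.sort hB.eigenvalues k) :=
      Tuple.monotone_sort hB.eigenvalues (Finset.mem_Iic.mp hl)
    exact mul_le_mul_of_nonneg_right this (sq_nonneg _)
  · rw [repr_eq_zero_of_mem_span hB _ hx hi]
    simp

/-- The key existence statement for the Courant–Fischer / Weyl comparison. -/
lemma weyl_aux {m : ℕ} {A B : Matrix (Fin m) (Fin m) ℝ} (hA : A.IsHermitian)
    (hB : B.IsHermitian) (k : Fin m) :
    ∃ x : EuclideanSpace ℝ (Fin m), x ≠ 0 ∧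
      hA.eigenvalues (Tuple.sort hA.eigenvalues k) * ((⇑x : Fin m → ℝ) ⬝ᵥ ⇑x)
        ≤ (⇑x : Fin m → ℝ) ⬝ᵥ (A *ᵥ ⇑x) ∧
      (⇑x : Fin m → ℝ) ⬝ᵥ (B *ᵥ ⇑x)
        ≤ hB.eigenvalues (Tuple.sort hB.eigenvalues k) * ((⇑x : Fin m → ℝ) ⬝ᵥ ⇑x) := by
  set sA := Finset.image (Tuple.sort hA.eigenvalues) (Finset.Ici k)
  set sB := Finset.image (Tuple.sort hB.eigenvalues) (Finset.Iic k)
  set T := Submodule.span ℝ (hA.eigenvectorBasis '' ↑sA)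
  set S := Submodule.span ℝ (hB.eigenvectorBasis '' ↑sB)
  have hcardA : sA.card = m - k := by
    rw [Finset.card_image_of_injective _ (Tuple.sort hA.eigenvalues).injective, Fin.card_Ici]
  have hcardB : sB.card = k + 1 := by
    rw [Finset.card_image_of_injective _ (Tuple.sort hB.eigenvalues).injective, Fin.card_Iic]
  have hdim : m < Module.finrank ℝ S + Module.finrank ℝ T := by
    rw [finrank_span_eigs, finrank_span_eigs, hcardA, hcardB]
    have := k.isLt
    omega
  obtain ⟨x, hxST, hx0⟩ := exists_nonzero_mem_inf S T hdim
  exact ⟨x, hx0, quad_lower hA k hxST.2, quad_upper hB k hxST.1⟩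

lemma dot_self_pos {m : ℕ} {x : EuclideanSpace ℝ (Fin m)} (hx : x ≠ 0) :
    0 < (⇑x : Fin m → ℝ) ⬝ᵥ ⇑x := by
  calc (0:ℝ) < ‖x‖ ^ 2 := pow_pos (norm_pos_iff.mpr hx) 2
    _ = inner ℝ x x := (real_inner_self_eq_norm_sq x).symm
    _ = (⇑x : Fin m → ℝ) ⬝ᵥ ⇑x := by
        exact inner_eq_dot' x x

lemma coe_ne_zero' {m : ℕ} {x : EuclideanSpace ℝ (Fin m)} (hx : x ≠ 0) :
    (⇑x : Fin m → ℝ) ≠ 0 := by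
  intro h
  exact hx ((WithLp.equiv 2 (Fin m → ℝ)).injective h)

/-- Weyl monotonicity of sorted eigenvalues, non-strict version. -/
lemma weyl_le {m : ℕ} {A B : Matrix (Fin m) (Fin m) ℝ} (hA : A.IsHermitian)
    (hB : B.IsHermitian) (hd : (B - A).PosSemidef) (k : Fin m) :
    hA.eigenvalues (Tuple.sort hA.eigenvalues k)
      ≤ hB.eigenvalues (Tuple.sort hB.eigenvalues k) := by
  obtain ⟨x, hx0, h1, h2⟩ := weyl_aux hA hB k
  have hAB : (⇑x : Fin m → ℝ) ⬝ᵥ (A *ᵥ ⇑x) ≤ (⇑x : Fin m → ℝ) ⬝ᵥ (B *ᵥ ⇑x) := by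
    have := hd.dotProduct_mulVec_nonneg ⇑x
    rw [star_trivial, Matrix.sub_mulVec, dotProduct_sub] at this
    linarith
  have hpos := dot_self_pos hx0
  exact le_of_mul_le_mul_right (by linarith) hpos

/-- Weyl monotonicity of sorted eigenvalues, strict version. -/
lemma weyl_lt {m : ℕ} {A B : Matrix (Fin m) (Fin m) ℝ} (hA : A.IsHermitian)
    (hB : B.IsHermitian) (hd : (B - A).PosDef) (k : Fin m) :
    hA.eigenvalues (Tuple.sort hA.eigenvalues k)
      < hB.eigenvalues (Tuple.sort hB.eigenvalues k) := by
  obtain ⟨x, hx0, h1, h2⟩ := weyl_aux hA hB k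
  have hAB : (⇑x : Fin m → ℝ) ⬝ᵥ (A *ᵥ ⇑x) < (⇑x : Fin m → ℝ) ⬝ᵥ (B *ᵥ ⇑x) := by
    have := hd.dotProduct_mulVec_pos (coe_ne_zero' hx0)
    rw [star_trivial, Matrix.sub_mulVec, dotProduct_sub] at this
    linarith
  have hpos := dot_self_pos hx0
  exact lt_of_mul_lt_mul_right (by linarith) hpos.le

section Cone
variable {m : ℕ} {Γ : Set (Fin m → ℝ)}

lemma cone_add (hΓconv : Convex ℝ Γ) (hΓcone : ∀ t : ℝ, 0 < t → ∀ x ∈ Γ, t • x ∈ Γ)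
    {x y : Fin m → ℝ} (hx : x ∈ Γ) (hy : y ∈ Γ) : x + y ∈ Γ := by
  have hmid : (1/2 : ℝ) • x + (1/2 : ℝ) • y ∈ Γ :=
    hΓconv hx hy (by norm_num) (by norm_num) (by norm_num)
  have := hΓcone 2 (by norm_num) _ hmid
  have heq : (2:ℝ) • ((1/2 : ℝ) • x + (1/2 : ℝ) • y) = x + y := by
    rw [smul_add, smul_smul, smul_smul]; norm_num
  rwa [heq] at this

lemma cone_add_nonneg (hΓopen : IsOpen Γ) (hΓconv : Convex ℝ Γ)
    (hΓcone : ∀ t : ℝ, 0 < t → ∀ x ∈ Γ, t • x ∈ Γ)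
    (hΓpos : {x : Fin m → ℝ | ∀ i, 0 < x i} ⊆ Γ)
    {x v : Fin m → ℝ} (hx : x ∈ Γ) (hv : ∀ i, 0 ≤ v i) : x + v ∈ Γ := by
  obtain ⟨ε, hε, hball⟩ := Metric.isOpen_iff.mp hΓopen x hx
  set one : Fin m → ℝ := fun _ => 1 with hone
  set δ : ℝ := ε / (2 * (‖one‖ + 1)) with hδ
  have hnorm1 : (0:ℝ) < ‖one‖ + 1 := by positivity
  have hδpos : 0 < δ := by positivity
  have h1 : x - δ • one ∈ Γ := by
    apply hball
    rw [Metric.mem_ball, dist_eq_norm]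
    have : x - δ • one - x = -(δ • one) := by abel
    rw [this, norm_neg, norm_smul, Real.norm_eq_abs, abs_of_pos hδpos]
    calc δ * ‖one‖ ≤ δ * (‖one‖ + 1) := by nlinarith [norm_nonneg one]
      _ = ε / 2 := by rw [hδ]; field_simp
      _ < ε := by linarith
  have h2 : v + δ • one ∈ Γ := by
    apply hΓpos
    intro i
    have := hv i
    simp only [Pi.add_apply, Pi.smul_apply, hone, smul_eq_mul, mul_one]
    linarith
  have := cone_add hΓconv hΓcone h1 h2
  have heq : x - δ • one + (v + δ • one) = x + v := by abel
  rwa [heq] at this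

end Cone

section Mono
variable {m : ℕ} {Γ : Set (Fin m → ℝ)} {f : (Fin m → ℝ) → ℝ}

lemma fderiv_eq_sum_pd {x : Fin m → ℝ} (v : Fin m → ℝ) :
    fderiv ℝ f x v = ∑ i, v i * pd f x i := by
  have hv : v = ∑ i, v i • (Pi.single i 1 : Fin m → ℝ) := by
    conv_lhs => rw [← Finset.univ_sum_single v]
    refine Finset.sum_congr rfl fun i _ => ?_
    rw [← Pi.single_smul, smul_eq_mul, mul_one]
  conv_lhs => rw [hv]
  rw [map_sum]
  exact Finset.sum_congr rfl fun i _ => by rw [_root_.map_smul]; rfl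

lemma hasDerivAt_line (hΓopen : IsOpen Γ) (hfsmooth : ContDiffOn ℝ (⊤ : ℕ∞) f Γ)
    {x v : Fin m → ℝ} {t : ℝ} (ht : x + t • v ∈ Γ) :
    HasDerivAt (fun s => f (x + s • v)) (∑ i, v i * pd f (x + t • v) i) t := by
  have hdiff : DifferentiableAt ℝ f (x + t • v) :=
    ((hfsmooth.contDiffAt (hΓopen.mem_nhds ht)).differentiableAt (by simp))
  have hcurve : HasDerivAt (fun s : ℝ => x + s • v) v t := by
    have h1 : HasDerivAt (fun s : ℝ => s • v) ((1:ℝ) • v) t := (hasDerivAt_id t).smul_const v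
    simpa using h1.const_add x
  have := hdiff.hasFDerivAt.comp_hasDerivAt t hcurve
  rwa [fderiv_eq_sum_pd v] at this

lemma f_mono_aux (hΓopen : IsOpen Γ) (hΓconv : Convex ℝ Γ)
    (hΓcone : ∀ t : ℝ, 0 < t → ∀ x ∈ Γ, t • x ∈ Γ)
    (hΓpos : {x : Fin m → ℝ | ∀ i, 0 < x i} ⊆ Γ)
    (hfsmooth : ContDiffOn ℝ (⊤ : ℕ∞) f Γ)
    (hf1 : ∀ x ∈ Γ, ∀ i, 0 < pd f x i)
    {x v : Fin m → ℝ} (hx : x ∈ Γ) (hv : ∀ i, 0 ≤ v i) :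
    f x ≤ f (x + v) ∧ ((∃ i, 0 < v i) → f x < f (x + v)) := by
  set g : ℝ → ℝ := fun s => f (x + s • v) with hg
  have hseg : ∀ t ∈ Set.Icc (0:ℝ) 1, x + t • v ∈ Γ := by
    intro t ht
    exact cone_add_nonneg hΓopen hΓconv hΓcone hΓpos hx
      (fun i => mul_nonneg ht.1 (hv i))
  have hD : ∀ t ∈ Set.Icc (0:ℝ) 1, HasDerivAt g (∑ i, v i * pd f (x + t • v) i) t :=
    fun t ht => hasDerivAt_line hΓopen hfsmooth (hseg t ht)
  have hcont : ContinuousOn g (Set.Icc 0 1) :=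
    fun t ht => ((hD t ht).differentiableAt.continuousAt).continuousWithinAt
  have hdiffOn : ∀ t ∈ interior (Set.Icc (0:ℝ) 1), DifferentiableAt ℝ g t := by
    intro t ht
    exact (hD t (interior_subset ht)).differentiableAt
  have hderiv : ∀ t ∈ Set.Icc (0:ℝ) 1, deriv g t = ∑ i, v i * pd f (x + t • v) i :=
    fun t ht => (hD t ht).deriv
  have hg0 : g 0 = f x := by simp [hg]
  have hg1 : g 1 = f (x + v) := by simp [hg]
  constructor
  · have hmono : MonotoneOn g (Set.Icc 0 1) := by
      apply monotoneOn_of_deriv_nonneg (convex_Icc 0 1) hcont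
      · intro t ht
        exact (hdiffOn t ht).differentiableWithinAt
      · intro t ht
        rw [hderiv t (interior_subset ht)]
        exact Finset.sum_nonneg fun i _ =>
          mul_nonneg (hv i) (hf1 _ (hseg t (interior_subset ht)) i).le
    have := hmono (Set.mem_Icc.mpr ⟨le_refl 0, zero_le_one⟩)
      (Set.mem_Icc.mpr ⟨zero_le_one, le_refl 1⟩) zero_le_one
    rwa [hg0, hg1] at this
  · rintro ⟨i0, hi0⟩
    have hmono : StrictMonoOn g (Set.Icc 0 1) := by
      apply strictMonoOn_of_deriv_pos (convex_Icc 0 1) hcont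
      intro t ht
      rw [hderiv t (interior_subset ht)]
      apply Finset.sum_pos'
      · exact fun i _ => mul_nonneg (hv i) (hf1 _ (hseg t (interior_subset ht)) i).le
      · exact ⟨i0, Finset.mem_univ i0,
          mul_pos hi0 (hf1 _ (hseg t (interior_subset ht)) i0)⟩
    have := hmono (Set.mem_Icc.mpr ⟨le_refl 0, zero_le_one⟩)
      (Set.mem_Icc.mpr ⟨zero_le_one, le_refl 1⟩) zero_lt_one
    rwa [hg0, hg1] at this

end Mono

end Aux

/-- if `A, B ∈ Sym_m`, `λ(A) ∈ Γ` and `B - A` is positive semidefinite, then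
`λ(B) ∈ Γ` and `f(λ(B)) ≥ f(λ(A))`; if moreover `B - A` is positive definite then the
inequality is strict. -/
theorem stmt_16 (m : ℕ) (hm : 2 ≤ m)
    (Γ : Set (Fin m → ℝ)) (f : (Fin m → ℝ) → ℝ)
    (hΓopen : IsOpen Γ) (hΓconv : Convex ℝ Γ) (hΓne : Γ.Nonempty)
    (hΓproper : Γ ≠ Set.univ)
    (hΓcone : ∀ t : ℝ, 0 < t → ∀ x ∈ Γ, t • x ∈ Γ)
    (hΓperm : ∀ π : Equiv.Perm (Fin m), ∀ x ∈ Γ, x ∘ π ∈ Γ)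
    (hΓpos : {x : Fin m → ℝ | ∀ i, 0 < x i} ⊆ Γ)
    (hfsmooth : ContDiffOn ℝ (⊤ : ℕ∞) f Γ)
    (hfsymm : ∀ π : Equiv.Perm (Fin m), ∀ x ∈ Γ, f (x ∘ π) = f x)
    (hf1 : ∀ x ∈ Γ, ∀ i, 0 < pd f x i)
    (hf2 : ConcaveOn ℝ Γ f)
    (A B : SymMat m)
    (hA : eigVec A ∈ Γ)
    (hBA : ((B : Matrix (Fin m) (Fin m) ℝ) - (A : Matrix (Fin m) (Fin m) ℝ)).PosSemidef) :
    eigVec B ∈ Γ ∧ f (eigVec B) ≥ f (eigVec A) ∧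
    (((B : Matrix (Fin m) (Fin m) ℝ) - (A : Matrix (Fin m) (Fin m) ℝ)).PosDef →
      f (eigVec B) > f (eigVec A)) := by
  have hA' : (A : Matrix (Fin m) (Fin m) ℝ).IsHermitian := IsSymm.isHermitianR A.2
  have hB' : (B : Matrix (Fin m) (Fin m) ℝ).IsHermitian := IsSymm.isHermitianR B.2
  set σ := Tuple.sort (eigVec A) with hσ
  set τ := Tuple.sort (eigVec B) with hτ
  set a' : Fin m → ℝ := eigVec A ∘ ⇑σ with ha'def
  set b' : Fin m → ℝ := eigVec B ∘ ⇑τ with hb'def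
  have hle : ∀ k, a' k ≤ b' k := fun k => weyl_le hA' hB' hBA k
  set v : Fin m → ℝ := b' - a' with hvdef
  have hv : ∀ k, 0 ≤ v k := fun k => sub_nonneg.mpr (hle k)
  have ha' : a' ∈ Γ := hΓperm σ _ hA
  have hb'eq : b' = a' + v := by
    funext k
    simp only [hvdef, Pi.add_apply, Pi.sub_apply]
    ring
  have hb' : b' ∈ Γ := by
    rw [hb'eq]
    exact cone_add_nonneg hΓopen hΓconv hΓcone hΓpos ha' hv
  have hBmem : eigVec B ∈ Γ := by
    have h := hΓperm τ.symm b' hb'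
    have heq : b' ∘ ⇑τ.symm = eigVec B := by
      funext i
      simp [hb'def, Function.comp, Equiv.apply_symm_apply]
    rwa [heq] at h
  have hfa : f a' = f (eigVec A) := hfsymm σ _ hA
  have hfb : f b' = f (eigVec B) := hfsymm τ _ hBmem
  have hmono := f_mono_aux hΓopen hΓconv hΓcone hΓpos hfsmooth hf1 ha' hv
  refine ⟨hBmem, ?_, ?_⟩
  · have h := hmono.1
    rw [← hb'eq, hfa, hfb] at h
    exact h
  · intro hpd
    have k0 : Fin m := ⟨0, by omega⟩
    have hlt : a' k0 < b' k0 := weyl_lt hA' hB' hpd k0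
    have h := hmono.2 ⟨k0, sub_pos.mpr hlt⟩
    rw [← hb'eq, hfa, hfb] at h
    exact h
end
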